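/- The quaternionic symplectic group Sp(n,H) = {M ∈ H^{2n×2n} : M̄ᵀJM = J} acts on the quaternionic half plane H_n = X_n + iY_n (Y_n the cone of positive definite quaternionic hermitian matrices) by Z ↦ (AZ+B)(CZ+D)^{-1}, i.e. CZ+D is invertible and the image again lies in H_n. -/

import Mathlib

set_option linter.unusedSectionVars false
set_option linter.unusedTactic false
set_option linter.unreachableTactic false

open Matrix Quaternion
open scoped ComplexOrder

/-- The check map `x ↦ x̌` from the quaternions to `2 × 2` complex matrices. -/
def check (x : Quaternion ℝ) : Matrix (Fin 2) (Fin 2) ℂ :=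
  !![⟨x.re, x.imI⟩, ⟨x.imJ, x.imK⟩; ⟨-x.imJ, x.imK⟩, ⟨x.re, -x.imI⟩]

/-- Entrywise application of the check map to a quaternionic matrix. -/
def checkMat {m : Type*} (A : Matrix m m (Quaternion ℝ)) :
    Matrix (m × Fin 2) (m × Fin 2) ℂ :=
  fun p q => check (A p.1 q.1) p.2 q.2

/-- The matrix `J = [[0,-E],[E,0]]` over the quaternions. -/
noncomputable def Jq (n : ℕ) : Matrix (Fin n ⊕ Fin n) (Fin n ⊕ Fin n) (Quaternion ℝ) :=
  Matrix.fromBlocks 0 (-1) 1 0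

/-- `M ∈ Sp(n,ℍ)` iff `M̄ᵀ J M = J`. -/
def inSp (n : ℕ) (M : Matrix (Fin n ⊕ Fin n) (Fin n ⊕ Fin n) (Quaternion ℝ)) : Prop :=
  Mᴴ * Jq n * M = Jq n

section CheckLemmas

lemma check_add (x y : Quaternion ℝ) : check (x + y) = check x + check y := by
  ext i j
  fin_cases i <;> fin_cases j <;> simp [check, Complex.ext_iff] <;> (try constructor) <;> (try ring)

lemma check_mul (x y : Quaternion ℝ) : check (x * y) = check x * check y := by
  ext i j
  fin_cases i <;> fin_cases j <;>
    simp [check, Matrix.mul_apply, Fin.sum_univ_two, Complex.ext_iff, Complex.mul_re,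
      Complex.mul_im, Quaternion.re_mul, Quaternion.imI_mul, Quaternion.imJ_mul,
      Quaternion.imK_mul] <;> constructor <;> ring

lemma check_one : check 1 = 1 := by
  ext i j
  fin_cases i <;> fin_cases j <;> simp [check, Complex.ext_iff, Matrix.one_apply]

lemma check_star (x : Quaternion ℝ) : check (star x) = (check x)ᴴ := by
  ext i j
  fin_cases i <;> fin_cases j <;>
    simp [check, Complex.ext_iff, Matrix.conjTranspose_apply]

lemma check_neg (x : Quaternion ℝ) : check (-x) = -check x := by
  ext i j
  fin_cases i <;> fin_cases j <;> simp [check, Complex.ext_iff]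

lemma check_zero : check 0 = 0 := by
  ext i j
  fin_cases i <;> fin_cases j <;> simp [check, Complex.ext_iff]

/-- `check` as an additive monoid hom. -/
def checkHom : Quaternion ℝ →+ Matrix (Fin 2) (Fin 2) ℂ where
  toFun := check
  map_zero' := check_zero
  map_add' := check_add

variable {m : Type*} [Fintype m] [DecidableEq m]

lemma checkMat_add (A B : Matrix m m (Quaternion ℝ)) :
    checkMat (A + B) = checkMat A + checkMat B := by
  ext p q; simp [checkMat, check_add]

lemma checkMat_neg (A : Matrix m m (Quaternion ℝ)) : checkMat (-A) = -checkMat A := by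
  ext p q; simp [checkMat, check_neg]

lemma checkMat_sub (A B : Matrix m m (Quaternion ℝ)) :
    checkMat (A - B) = checkMat A - checkMat B := by
  rw [sub_eq_add_neg, sub_eq_add_neg, checkMat_add, checkMat_neg]

lemma checkMat_zero : checkMat (0 : Matrix m m (Quaternion ℝ)) = 0 := by
  ext p q; simp [checkMat, check_zero]

lemma checkMat_one : checkMat (1 : Matrix m m (Quaternion ℝ)) = 1 := by
  ext ⟨p1, p2⟩ ⟨q1, q2⟩
  by_cases h : p1 = q1
  · subst h
    simp [checkMat, Matrix.one_apply, check_one, Prod.ext_iff]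
  · simp [checkMat, Matrix.one_apply, h, check_zero]

lemma checkMat_mul (A B : Matrix m m (Quaternion ℝ)) :
    checkMat (A * B) = checkMat A * checkMat B := by
  ext p q
  show check ((A * B) p.1 q.1) p.2 q.2 = _
  rw [Matrix.mul_apply, Matrix.mul_apply, Fintype.sum_prod_type,
    show check (∑ j, A p.1 j * B j q.1) = ∑ j, check (A p.1 j * B j q.1) from
      map_sum checkHom _ _]
  simp only [check_mul, Matrix.sum_apply, Matrix.mul_apply, Fin.sum_univ_two, checkMat]

lemma checkMat_conjTranspose (A : Matrix m m (Quaternion ℝ)) :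
    checkMat Aᴴ = (checkMat A)ᴴ := by
  ext p q
  simp [checkMat, Matrix.conjTranspose_apply, check_star]

lemma checkMat_injective : Function.Injective (checkMat (m := m)) := by
  intro A B h
  have key : ∀ p q, A p q = B p q := by
    intro p q
    have h00 := congrFun (congrFun h (p, 0)) (q, 0)
    have h01 := congrFun (congrFun h (p, 0)) (q, 1)
    simp [checkMat, check, Complex.ext_iff] at h00 h01
    exact Quaternion.ext _ _ h00.1 h00.2 h01.1 h01.2
  ext p q <;> rw [key p q]

end CheckLemmas

section Sigma

variable {m : Type*} [Fintype m] [DecidableEq m]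

/-- sign used in the quaternionic structure map -/
def ssgn : Fin 2 → ℂ := fun s => if s = 0 then 1 else -1

/-- index flip -/
def sflip : Fin 2 → Fin 2 := fun s => if s = 0 then 1 else 0

/-- The quaternionic structure map `W ↦ J W̄ J⁻¹` written entrywise. -/
def sig (W : Matrix (m × Fin 2) (m × Fin 2) ℂ) : Matrix (m × Fin 2) (m × Fin 2) ℂ :=
  fun p q => ssgn p.2 * ssgn q.2 * (starRingEnd ℂ) (W (p.1, sflip p.2) (q.1, sflip q.2))

lemma sig_add (V W : Matrix (m × Fin 2) (m × Fin 2) ℂ) :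
    sig (V + W) = sig V + sig W := by
  ext p q; simp [sig]; ring

lemma sig_sub (V W : Matrix (m × Fin 2) (m × Fin 2) ℂ) :
    sig (V - W) = sig V - sig W := by
  ext p q; simp [sig]; ring

lemma sig_smul (c : ℂ) (W : Matrix (m × Fin 2) (m × Fin 2) ℂ) :
    sig (c • W) = (starRingEnd ℂ c) • sig W := by
  ext p q; simp [sig]; ring

lemma sig_one : sig (1 : Matrix (m × Fin 2) (m × Fin 2) ℂ) = 1 := by
  ext ⟨p1, p2⟩ ⟨q1, q2⟩
  by_cases h : p1 = q1
  · subst h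
    fin_cases p2 <;> fin_cases q2 <;>
      simp [sig, ssgn, sflip, Matrix.one_apply, Prod.ext_iff]
  · fin_cases p2 <;> fin_cases q2 <;>
      simp [sig, ssgn, sflip, Matrix.one_apply, Prod.ext_iff, h]

lemma sig_mul (V W : Matrix (m × Fin 2) (m × Fin 2) ℂ) :
    sig (V * W) = sig V * sig W := by
  ext ⟨p1, p2⟩ ⟨q1, q2⟩
  simp only [sig, Matrix.mul_apply, Fintype.sum_prod_type, Fin.sum_univ_two, map_add,
    _root_.map_mul, map_sum]
  rw [Finset.mul_sum]
  apply Finset.sum_congr rfl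
  intro k _
  fin_cases p2 <;> fin_cases q2 <;> simp [ssgn, sflip] <;> ring

lemma sig_conjTranspose (W : Matrix (m × Fin 2) (m × Fin 2) ℂ) :
    sig Wᴴ = (sig W)ᴴ := by
  ext ⟨p1, p2⟩ ⟨q1, q2⟩
  fin_cases p2 <;> fin_cases q2 <;>
    simp [sig, ssgn, sflip, Matrix.conjTranspose_apply] <;> ring

lemma sig_checkMat (A : Matrix m m (Quaternion ℝ)) : sig (checkMat A) = checkMat A := by
  ext ⟨p1, p2⟩ ⟨q1, q2⟩
  fin_cases p2 <;> fin_cases q2 <;>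
    simp [sig, ssgn, sflip, checkMat, check, Complex.ext_iff]

/-- Inverse of the check map. -/
noncomputable def uncheckMat (W : Matrix (m × Fin 2) (m × Fin 2) ℂ) :
    Matrix m m (Quaternion ℝ) :=
  fun p q => ⟨(W (p, 0) (q, 0)).re, (W (p, 0) (q, 0)).im,
    (W (p, 0) (q, 1)).re, (W (p, 0) (q, 1)).im⟩

lemma checkMat_uncheckMat {W : Matrix (m × Fin 2) (m × Fin 2) ℂ} (h : sig W = W) :
    checkMat (uncheckMat W) = W := by
  ext ⟨p, s⟩ ⟨q, t⟩
  have h11 := congrFun (congrFun h ((p, 1) : m × Fin 2)) ((q, 1) : m × Fin 2)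
  have h10 := congrFun (congrFun h ((p, 1) : m × Fin 2)) ((q, 0) : m × Fin 2)
  simp only [sig, ssgn, sflip] at h11 h10
  norm_num at h11 h10
  fin_cases s <;> fin_cases t <;>
    simp [checkMat, check, uncheckMat, ← h11, ← h10, Complex.ext_iff]

end Sigma

section Key

variable {ι : Type*} [Fintype ι] [DecidableEq ι]

lemma keyid (𝒜 ℬ 𝒞 𝒟 Z W : Matrix ι ι ℂ)
    (h1 : 𝒞ᴴ * 𝒜 = 𝒜ᴴ * 𝒞) (h2 : 𝒞ᴴ * ℬ - 𝒜ᴴ * 𝒟 = -1)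
    (h3 : 𝒟ᴴ * 𝒜 - ℬᴴ * 𝒞 = 1) (h4 : 𝒟ᴴ * ℬ = ℬᴴ * 𝒟) :
    (𝒞 * Z + 𝒟)ᴴ * (𝒜 * W + ℬ) - (𝒜 * Z + ℬ)ᴴ * (𝒞 * W + 𝒟) = W - Zᴴ := by
  have expand : (𝒞 * Z + 𝒟)ᴴ * (𝒜 * W + ℬ) - (𝒜 * Z + ℬ)ᴴ * (𝒞 * W + 𝒟)
      = Zᴴ * (𝒞ᴴ * 𝒜 - 𝒜ᴴ * 𝒞) * W + Zᴴ * (𝒞ᴴ * ℬ - 𝒜ᴴ * 𝒟)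
        + (𝒟ᴴ * 𝒜 - ℬᴴ * 𝒞) * W + (𝒟ᴴ * ℬ - ℬᴴ * 𝒟) := by
    simp only [Matrix.conjTranspose_add, Matrix.conjTranspose_mul]
    noncomm_ring
  rw [expand, h1, h2, h3, h4]
  simp only [sub_self, Matrix.mul_zero, Matrix.zero_mul, Matrix.mul_neg, Matrix.mul_one,
    Matrix.one_mul, zero_add, add_zero]
  abel

lemma posdef_conj {Y T : Matrix ι ι ℂ} (hY : Y.PosDef) (hT : IsUnit T) :
    (Tᴴ * Y * T).PosDef := by
  refine Matrix.posDef_iff_dotProduct_mulVec.mpr ⟨?_, ?_⟩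
  · show (Tᴴ * Y * T)ᴴ = _
    rw [Matrix.conjTranspose_mul, Matrix.conjTranspose_mul, Matrix.conjTranspose_conjTranspose,
      hY.1.eq, Matrix.mul_assoc]
  · intro v hv
    have hTv : T *ᵥ v ≠ 0 := by
      intro h0
      apply hv
      have := congrArg (fun w => T⁻¹ *ᵥ w) h0
      simpa [Matrix.mulVec_mulVec, Matrix.nonsing_inv_mul T
        ((Matrix.isUnit_iff_isUnit_det T).1 hT)] using this
    have : star v ⬝ᵥ (Tᴴ * Y * T) *ᵥ v = star (T *ᵥ v) ⬝ᵥ Y *ᵥ (T *ᵥ v) := by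
      rw [Matrix.star_mulVec, Matrix.mul_assoc, ← Matrix.mulVec_mulVec,
        Matrix.dotProduct_mulVec (star v) Tᴴ _, ← Matrix.mulVec_mulVec]
    rw [this]
    exact hY.dotProduct_mulVec_pos hTv

end Key

theorem sp_action (n : ℕ)
    (M : Matrix (Fin n ⊕ Fin n) (Fin n ⊕ Fin n) (Quaternion ℝ)) (hM : inSp n M)
    (X Y : Matrix (Fin n) (Fin n) (Quaternion ℝ))
    (hX : Xᴴ = X) (hY : Yᴴ = Y) (hYpos : (checkMat Y).PosDef) :
    IsUnit (checkMat M.toBlocks₂₁ * (checkMat X + Complex.I • checkMat Y)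
        + checkMat M.toBlocks₂₂) ∧
    ∃ X' Y' : Matrix (Fin n) (Fin n) (Quaternion ℝ),
      X'ᴴ = X' ∧ Y'ᴴ = Y' ∧ (checkMat Y').PosDef ∧
      (checkMat M.toBlocks₁₁ * (checkMat X + Complex.I • checkMat Y)
          + checkMat M.toBlocks₁₂) *
        (checkMat M.toBlocks₂₁ * (checkMat X + Complex.I • checkMat Y)
          + checkMat M.toBlocks₂₂)⁻¹
        = checkMat X' + Complex.I • checkMat Y' := by
  -- Quaternionic block relations coming from `M ∈ Sp(n, ℍ)`
  set A := M.toBlocks₁₁ with hA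
  set B := M.toBlocks₁₂ with hB
  set C := M.toBlocks₂₁ with hC
  set D := M.toBlocks₂₂ with hD
  have hM' : Matrix.fromBlocks (Cᴴ * A + (-Aᴴ) * C) (Cᴴ * B + (-Aᴴ) * D)
      (Dᴴ * A + (-Bᴴ) * C) (Dᴴ * B + (-Bᴴ) * D)
      = Matrix.fromBlocks 0 (-1) 1 0 := by
    have h := hM
    unfold inSp Jq at h
    rw [← Matrix.fromBlocks_toBlocks M, Matrix.fromBlocks_conjTranspose,
      Matrix.fromBlocks_multiply, Matrix.fromBlocks_multiply] at h
    simpa [Matrix.mul_one, Matrix.mul_zero, Matrix.mul_neg] using h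
  rw [Matrix.fromBlocks_inj] at hM'
  obtain ⟨e1, e2, e3, e4⟩ := hM'
  have q1 : Cᴴ * A = Aᴴ * C := by
    have : Cᴴ * A - Aᴴ * C = 0 := by simpa [neg_mul, sub_eq_add_neg] using e1
    exact sub_eq_zero.mp this
  have q2 : Cᴴ * B - Aᴴ * D = -1 := by simpa [neg_mul, sub_eq_add_neg] using e2
  have q3 : Dᴴ * A - Bᴴ * C = 1 := by simpa [neg_mul, sub_eq_add_neg] using e3
  have q4 : Dᴴ * B = Bᴴ * D := by
    have : Dᴴ * B - Bᴴ * D = 0 := by simpa [neg_mul, sub_eq_add_neg] using e4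
    exact sub_eq_zero.mp this
  -- complex versions
  set CA := checkMat A with hCA
  set CB := checkMat B with hCB
  set CC := checkMat C with hCC
  set CD := checkMat D with hCD
  set CX := checkMat X with hCX
  set CY := checkMat Y with hCY
  have h1 : CCᴴ * CA = CAᴴ * CC := by
    have h := congrArg checkMat q1
    rwa [checkMat_mul, checkMat_mul, checkMat_conjTranspose, checkMat_conjTranspose] at h
  have h2 : CCᴴ * CB - CAᴴ * CD = -1 := by
    have h := congrArg checkMat q2
    rwa [checkMat_sub, checkMat_mul, checkMat_mul, checkMat_conjTranspose,
      checkMat_conjTranspose, checkMat_neg, checkMat_one] at h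
  have h3 : CDᴴ * CA - CBᴴ * CC = 1 := by
    have h := congrArg checkMat q3
    rwa [checkMat_sub, checkMat_mul, checkMat_mul, checkMat_conjTranspose,
      checkMat_conjTranspose, checkMat_one] at h
  have h4 : CDᴴ * CB = CBᴴ * CD := by
    have h := congrArg checkMat q4
    rwa [checkMat_mul, checkMat_mul, checkMat_conjTranspose, checkMat_conjTranspose] at h
  have hXH : CXᴴ = CX := by rw [hCX, ← checkMat_conjTranspose, hX]
  have hYH : CYᴴ = CY := by rw [hCY, ← checkMat_conjTranspose, hY]
  set Z := CX + Complex.I • CY with hZ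
  set T := CC * Z + CD with hT
  set S := CA * Z + CB with hS
  have hZH : Zᴴ = CX + (-Complex.I) • CY := by
    rw [hZ, Matrix.conjTranspose_add, Matrix.conjTranspose_smul, hXH, hYH]
    norm_num [Complex.star_def, Complex.conj_I]
  have hZZ : Z - Zᴴ = (2 * Complex.I) • CY := by
    rw [hZH, hZ]
    module
  have key1 : Tᴴ * S - Sᴴ * T = (2 * Complex.I) • CY := by
    rw [hT, hS, keyid CA CB CC CD Z Z h1 h2 h3 h4, hZZ]
  -- invertibility of T
  have hTdet : IsUnit T.det := by
    rw [isUnit_iff_ne_zero]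
    intro hdet
    obtain ⟨v, hv, hTv⟩ := Matrix.exists_mulVec_eq_zero_iff.mpr hdet
    have hpos := hYpos.dotProduct_mulVec_pos hv
    have hz : star v ⬝ᵥ ((2 * Complex.I) • CY) *ᵥ v = 0 := by
      rw [← key1, Matrix.sub_mulVec, dotProduct_sub, ← Matrix.mulVec_mulVec,
        ← Matrix.mulVec_mulVec, hTv, Matrix.dotProduct_mulVec, ← Matrix.star_mulVec, hTv]
      simp
    rw [Matrix.smul_mulVec, dotProduct_smul, smul_eq_mul] at hz
    rcases mul_eq_zero.mp hz with h | h
    · simp [Complex.I_ne_zero] at h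
    · rw [hCY] at hpos
      exact hpos.ne' h
  have hTunit : IsUnit T := (Matrix.isUnit_iff_isUnit_det T).2 hTdet
  have hTinv : T * T⁻¹ = 1 := Matrix.mul_nonsing_inv T hTdet
  have hTinv' : T⁻¹ * T = 1 := Matrix.nonsing_inv_mul T hTdet
  have hTH : T⁻¹ᴴ * Tᴴ = 1 := by
    rw [← Matrix.conjTranspose_mul, hTinv, Matrix.conjTranspose_one]
  have hTinvUnit : IsUnit T⁻¹ := (Matrix.isUnit_iff_isUnit_det _).2
    (IsUnit.of_mul_eq_one T.det (by rw [← Matrix.det_mul, hTinv', Matrix.det_one]))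
  set W := S * T⁻¹ with hW
  set Q := T⁻¹ᴴ * CY * T⁻¹ with hQ
  have hQpos : Q.PosDef := by
    rw [hQ, hCY]
    exact posdef_conj hYpos hTinvUnit
  have hQH : Qᴴ = Q := hQpos.1
  have hWW : W - Wᴴ = (2 * Complex.I) • Q := by
    have e : W - Wᴴ = (T⁻¹ᴴ * Tᴴ) * (S * T⁻¹) - (T⁻¹ᴴ * Sᴴ) * (T * T⁻¹) := by
      rw [hTH, hTinv, Matrix.one_mul, Matrix.mul_one, hW, Matrix.conjTranspose_mul,
        Matrix.conjTranspose_nonsing_inv]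
    have e2 : (T⁻¹ᴴ * Tᴴ) * (S * T⁻¹) - (T⁻¹ᴴ * Sᴴ) * (T * T⁻¹)
        = T⁻¹ᴴ * (Tᴴ * S - Sᴴ * T) * T⁻¹ := by noncomm_ring
    rw [e, e2, key1, Matrix.mul_smul, Matrix.smul_mul, hQ]
  -- the quaternionic structure map
  have hsZ : sig Z = Zᴴ := by
    rw [hZ, sig_add, sig_smul, hCX, hCY, sig_checkMat, sig_checkMat, Complex.conj_I,
      ← hCX, ← hCY, ← hZH]
  have hsT : sig T = CC * Zᴴ + CD := by
    rw [hT, sig_add, sig_mul, hCC, hCD, sig_checkMat, sig_checkMat, ← hCC, ← hCD, hsZ]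
  have hsS : sig S = CA * Zᴴ + CB := by
    rw [hS, sig_add, sig_mul, hCA, hCB, sig_checkMat, sig_checkMat, ← hCA, ← hCB, hsZ]
  have key2 : Tᴴ * sig S = Sᴴ * sig T := by
    rw [hsS, hsT]
    have h := keyid CA CB CC CD Z Zᴴ h1 h2 h3 h4
    rw [sub_self] at h
    rw [hT, hS]
    exact sub_eq_zero.mp h
  have hsTinv : sig T * sig T⁻¹ = 1 := by rw [← sig_mul, hTinv, sig_one]
  have hsW : sig W = Wᴴ := by
    rw [hW, sig_mul]
    calc sig S * sig T⁻¹ = (T⁻¹ᴴ * Tᴴ) * sig S * sig T⁻¹ := by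
          rw [hTH, Matrix.one_mul]
      _ = T⁻¹ᴴ * (Tᴴ * sig S) * sig T⁻¹ := by rw [Matrix.mul_assoc T⁻¹ᴴ Tᴴ (sig S)]
      _ = T⁻¹ᴴ * Sᴴ * (sig T * sig T⁻¹) := by rw [key2]; noncomm_ring
      _ = (S * T⁻¹)ᴴ := by
          rw [hsTinv, Matrix.mul_one, ← Matrix.conjTranspose_mul]
  have h2I : (2 * Complex.I : ℂ) ≠ 0 := by simp [Complex.I_ne_zero]
  have hsQ : sig Q = Q := by
    have hs : sig (W - Wᴴ) = Wᴴ - W := by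
      rw [sig_sub, hsW, sig_conjTranspose, hsW, Matrix.conjTranspose_conjTranspose]
    rw [hWW, sig_smul] at hs
    have hconj : (starRingEnd ℂ) (2 * Complex.I) = -(2 * Complex.I) := by
      simp [Complex.ext_iff]
    rw [hconj] at hs
    have hs' : (-(2 * Complex.I)) • Q = Wᴴ - W := by
      rw [neg_smul, ← hWW, neg_sub]
    rw [← hs'] at hs
    exact smul_right_injective _ (neg_ne_zero.mpr h2I) hs
  set P := W - Complex.I • Q with hP
  have hPH : Pᴴ = P := by
    have hd : P - Pᴴ = (W - Wᴴ) - (2 * Complex.I) • Q := by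
      rw [hP, Matrix.conjTranspose_sub, Matrix.conjTranspose_smul, hQH]
      norm_num [Complex.star_def, Complex.conj_I]
      module
    rw [hWW, sub_self] at hd
    exact (sub_eq_zero.mp hd).symm
  have hsP : sig P = P := by
    have hWH : Wᴴ = W - (2 * Complex.I) • Q := by
      rw [← hWW]
      module
    have hsp : sig P = Wᴴ + Complex.I • Q := by
      rw [hP, sig_sub, hsW, sig_smul, hsQ, Complex.conj_I]
      module
    rw [hsp, hWH, hP]
    module
  refine ⟨hTunit, uncheckMat P, uncheckMat Q, ?_, ?_, ?_, ?_⟩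
  · apply checkMat_injective
    rw [checkMat_conjTranspose, checkMat_uncheckMat hsP, hPH]
  · apply checkMat_injective
    rw [checkMat_conjTranspose, checkMat_uncheckMat hsQ, hQH]
  · rw [checkMat_uncheckMat hsQ]
    exact hQpos
  · rw [checkMat_uncheckMat hsP, checkMat_uncheckMat hsQ, hP]
    module
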